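/- Suppose the spreading matrix X satisfies the inverse condition X^{-1} = (P_{0:n-1}^{-T}1_b | ... | P_0^{-T}1_b)^T. Then for all 0 ≤ i, j < 2^n, the entry W(P)[j, i] equals +1 if i_b^T P_{0:n}^T (X X^T)^{-1} j_b = 0 in F_2, and equals −1 otherwise. Equivalently, { j_b : W(P)[j,i] = 1 } = ker(i_b^T P_{0:n}^T (X X^T)^{-1}). -/

import Mathlib

open Matrix

/-- Binary representation of `i` as a vector in `F_2^n`, most significant bit first. -/
def bits (n : ℕ) (i : Fin (2 ^ n)) : Fin n → ZMod 2 :=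
  fun k => if Nat.testBit i.val (n - 1 - k.val) then 1 else 0

/-- The vector `1_b = (0,...,0,1)ᵀ`. -/
def oneb (n : ℕ) : Fin n → ZMod 2 := fun k => if k.val = n - 1 then 1 else 0

/-- Permutation matrix `P(Q)` of the linear permutation `π(Q)`:
entry `(j, i)` is `1` iff `j_b = Q i_b`. -/
def permMat (n : ℕ) (Q : Matrix (Fin n) (Fin n) (ZMod 2)) :
    Matrix (Fin (2 ^ n)) (Fin (2 ^ n)) ℤ :=
  Matrix.of fun j i => if bits n j = Q.mulVec (bits n i) then 1 else 0

/-- The array of butterflies `I_{2^{n-1}} ⊗ DFT_2`. -/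
def butterflies (n : ℕ) : Matrix (Fin (2 ^ n)) (Fin (2 ^ n)) ℤ :=
  Matrix.of fun j i =>
    if j.val / 2 = i.val / 2 then (if j.val % 2 = 1 ∧ i.val % 2 = 1 then -1 else 1) else 0

/-- `W(P) = P(P₀)·(I ⊗ DFT₂)·P(P₁) ⋯ (I ⊗ DFT₂)·P(Pₙ)`. -/
def W (n : ℕ) (P : ℕ → Matrix (Fin n) (Fin n) (ZMod 2)) :
    Matrix (Fin (2 ^ n)) (Fin (2 ^ n)) ℤ :=
  permMat n (P 0) * (List.ofFn fun k : Fin n => butterflies n * permMat n (P (k.val + 1))).prod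

/-- `P_{i:j} = P_i P_{i+1} ⋯ P_j` (identity if `j < i`). -/
def Pseg {n : ℕ} (P : ℕ → Matrix (Fin n) (Fin n) (ZMod 2)) (i j : ℕ) :
    Matrix (Fin n) (Fin n) (ZMod 2) :=
  ((List.range (j + 1 - i)).map fun k => P (i + k)).prod

/-- The spreading matrix `X = (P_{0:n-1}1_b | P_{0:n-2}1_b | ⋯ | P_0 1_b)`. -/
def spread (n : ℕ) (P : ℕ → Matrix (Fin n) (Fin n) (ZMod 2)) :
    Matrix (Fin n) (Fin n) (ZMod 2) :=
  Matrix.of fun r c => (Pseg P 0 (n - 1 - c.val)).mulVec (oneb n) r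

/-- The matrix whose rows are `(P_{0:n-1}^{-T}1_b)ᵀ, ..., (P_0^{-T}1_b)ᵀ`. -/
noncomputable def spreadInvRows (n : ℕ) (P : ℕ → Matrix (Fin n) (Fin n) (ZMod 2)) :
    Matrix (Fin n) (Fin n) (ZMod 2) :=
  Matrix.of fun r c => (Pseg P 0 (n - 1 - r.val))⁻¹.transpose.mulVec (oneb n) c

/-- The Hadamard matrix `H_n` with entries `(-1)^{⟨i_b, j_b⟩}`. -/
def hadamard (n : ℕ) : Matrix (Fin (2 ^ n)) (Fin (2 ^ n)) ℤ :=
  Matrix.of fun i j => (-1) ^ (∑ k, bits n i k * bits n j k).val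

/-- The cyclic bit-rotation matrix `C_n`: ones on the superdiagonal and in the
bottom-left corner. -/
def Cmat (n : ℕ) : Matrix (Fin n) (Fin n) (ZMod 2) :=
  Matrix.of fun k l => if l.val = k.val + 1 ∨ (k.val = n - 1 ∧ l.val = 0) then 1 else 0

section Lemmas
variable {n : ℕ} (P : ℕ → Matrix (Fin n) (Fin n) (ZMod 2))



/-- sign character -/
def chi (u : ZMod 2) : ℤ := if u = 0 then 1 else -1

lemma chi_add (u v : ZMod 2) : chi (u + v) = chi u * chi v := by revert u v; decide

lemma chi_zero : chi 0 = 1 := rfl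

lemma chi_sum {α : Type*} (s : Finset α) (f : α → ZMod 2) :
    chi (∑ a ∈ s, f a) = ∏ a ∈ s, chi (f a) := by
  classical
  induction s using Finset.induction with
  | empty => simp [chi_zero]
  | @insert a s h ih => simp [Finset.sum_insert h, Finset.prod_insert h, chi_add, ih]

lemma bits_injective (n : ℕ) : Function.Injective (bits n) := by
  intro x y h
  ext
  apply Nat.eq_of_testBit_eq
  intro p
  by_cases hp : p < n
  · have hk : n - 1 - (n - 1 - p) = p := by omega
    have := congrFun h ⟨n - 1 - p, by omega⟩
    simp only [bits, hk] at this
    by_cases hx : x.val.testBit p <;> by_cases hy : y.val.testBit p <;>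
      simp [hx, hy] at this ⊢
  · rw [Nat.testBit_lt_two_pow, Nat.testBit_lt_two_pow]
    · exact lt_of_lt_of_le y.2 (Nat.pow_le_pow_right (by norm_num) (by omega))
    · exact lt_of_lt_of_le x.2 (Nat.pow_le_pow_right (by norm_num) (by omega))

lemma bits_bijective (n : ℕ) : Function.Bijective (bits n) := by
  rw [Fintype.bijective_iff_injective_and_card]
  exact ⟨bits_injective n, by simp⟩

/-- bits as an equiv -/
noncomputable def bE (n : ℕ) : Fin (2 ^ n) ≃ (Fin n → ZMod 2) :=
  Equiv.ofBijective _ (bits_bijective n)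

lemma bE_apply (n : ℕ) (x : Fin (2 ^ n)) : bE n x = bits n x := rfl

lemma bits_bE_symm (n : ℕ) (v : Fin n → ZMod 2) : bits n ((bE n).symm v) = v :=
  (bE n).apply_symm_apply v

/-- collapse a delta-sum over `Fin (2^n)` -/
lemma sum_bits_delta (n : ℕ) (v : Fin n → ZMod 2) (f : Fin (2 ^ n) → ℤ) :
    (∑ x : Fin (2 ^ n), if bits n x = v then f x else 0) = f ((bE n).symm v) := by
  have : ∀ x : Fin (2 ^ n), (bits n x = v) ↔ (x = (bE n).symm v) := by
    intro x
    constructor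
    · intro h; apply (bE n).injective; rw [Equiv.apply_symm_apply]; exact h
    · rintro rfl; exact bits_bE_symm n v
  simp only [this]
  simp



lemma Pseg_same (m : ℕ) : Pseg P m m = P m := by
  simp [Pseg, List.range_succ]

lemma Pseg_empty {i l : ℕ} (h : l < i) : Pseg P i l = 1 := by
  have : l + 1 - i = 0 := by omega
  simp [Pseg, this]

lemma Pseg_append {i j l : ℕ} (h1 : i ≤ j + 1) (h2 : j ≤ l) :
    Pseg P i j * Pseg P (j + 1) l = Pseg P i l := by
  have hsplit : l + 1 - i = (j + 1 - i) + (l - j) := by omega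
  have hlist : (List.range (l + 1 - i)).map (fun k => P (i + k)) =
      (List.range (j + 1 - i)).map (fun k => P (i + k)) ++
      (List.range (l + 1 - (j + 1))).map (fun k => P (j + 1 + k)) := by
    rw [hsplit, List.range_add, List.map_append, List.map_map]
    congr 1
    · have h3 : l + 1 - (j + 1) = l - j := by omega
      rw [h3]
      apply List.map_congr_left
      intro a _
      simp only [Function.comp_apply]
      have : i + (j + 1 - i + a) = j + 1 + a := by omega
      rw [this]
  rw [Pseg, Pseg, Pseg, hlist, List.prod_append]

lemma Pseg_cons {m l : ℕ} (h : m ≤ l) : Pseg P m l = P m * Pseg P (m + 1) l := by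
  rw [← Pseg_append P (show m ≤ m + 1 by omega) h, Pseg_same]

lemma isUnit_list_prod (L : List ℕ) (h : ∀ k ∈ L, IsUnit (P k)) :
    IsUnit ((L.map P).prod) := by
  induction L with
  | nil => simp
  | cons a L ih =>
    simp only [List.map_cons, List.prod_cons]
    exact (h a (by simp)).mul (ih fun k hk => h k (by simp [hk]))

lemma Pseg_isUnit {N i l : ℕ} (hP : ∀ k ≤ N, IsUnit (P k)) (h : l ≤ N) :
    IsUnit (Pseg P i l) := by
  rw [Pseg, show (fun k => P (i + k)) = P ∘ (fun k => i + k) from rfl, ← List.map_map]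
  apply isUnit_list_prod
  intro k hk
  simp only [List.mem_map, List.mem_range] at hk
  obtain ⟨x, hx, rfl⟩ := hk
  exact hP _ (by omega)



lemma sum_zmod2 {M : Type*} [AddCommMonoid M] (f : ZMod 2 → M) :
    ∑ t : ZMod 2, f t = f 0 + f 1 := by
  have : (Finset.univ : Finset (ZMod 2)) = {0, 1} := by decide
  rw [this, Finset.sum_insert (by decide), Finset.sum_singleton]

lemma zmod2_cases (t : ZMod 2) : t = 0 ∨ t = 1 := by revert t; decide

lemma dot_oneb (hn : 1 ≤ n) (v : Fin n → ZMod 2) :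
    oneb n ⬝ᵥ v = v ⟨n - 1, by omega⟩ := by
  rw [dotProduct]
  rw [Finset.sum_eq_single (⟨n - 1, by omega⟩ : Fin n)]
  · simp [oneb]
  · intro b _ hb
    have : b.val ≠ n - 1 := fun h => hb (by ext; exact h)
    simp [oneb, this]
  · simp

lemma bits_last (hn : 1 ≤ n) (x : Fin (2 ^ n)) :
    bits n x ⟨n - 1, by omega⟩ = if x.val % 2 = 1 then 1 else 0 := by
  simp only [bits, Nat.sub_self, Nat.testBit_zero]
  by_cases h : x.val % 2 = 1 <;> simp [h]

lemma oneb_last (hn : 1 ≤ n) : oneb n ⟨n - 1, by omega⟩ = 1 := by simp [oneb]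

lemma testBit_eq_of_div {x y : ℕ} (h : y / 2 = x / 2) (p : ℕ) (hp : 1 ≤ p) :
    y.testBit p = x.testBit p := by
  have h2 := congrArg (fun z => Nat.testBit z (p - 1)) h
  simp only [Nat.testBit_div_two] at h2
  rwa [Nat.sub_add_cancel hp] at h2

lemma div_eq_of_testBit {x y : ℕ} (h : ∀ p, 1 ≤ p → y.testBit p = x.testBit p) :
    y / 2 = x / 2 :=
  Nat.eq_of_testBit_eq fun p => by
    rw [Nat.testBit_div_two, Nat.testBit_div_two]; exact h (p + 1) (by omega)

lemma bits_eq_add_smul_iff (hn : 1 ≤ n) (x y : Fin (2 ^ n)) (t : ZMod 2) :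
    bits n y = bits n x + t • oneb n ↔
      (y.val / 2 = x.val / 2 ∧ ((y.val % 2 = x.val % 2) ↔ t = 0)) := by
  constructor
  · intro h
    constructor
    · apply div_eq_of_testBit
      intro p hp
      by_cases hpn : p ≤ n - 1
      · have hk : n - 1 - (n - 1 - p) = p := by omega
        have hkne : n - 1 - p ≠ n - 1 := by omega
        have := congrFun h ⟨n - 1 - p, by omega⟩
        simp only [bits, Pi.add_apply, Pi.smul_apply, oneb, hk, hkne, if_neg, smul_eq_mul,
          mul_zero, add_zero, if_false] at this
        by_cases hx : x.val.testBit p <;> by_cases hy : y.val.testBit p <;>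
          simp [hx, hy] at this ⊢
      · rw [Nat.testBit_lt_two_pow, Nat.testBit_lt_two_pow]
        · exact lt_of_lt_of_le x.2 (Nat.pow_le_pow_right (by norm_num) (by omega))
        · exact lt_of_lt_of_le y.2 (Nat.pow_le_pow_right (by norm_num) (by omega))
    · have := congrFun h ⟨n - 1, by omega⟩
      rw [bits_last hn, Pi.add_apply, Pi.smul_apply, bits_last hn, oneb_last hn,
        smul_eq_mul, mul_one] at this
      rcases zmod2_cases t with rfl | rfl
      · rw [add_zero] at this
        simp only [iff_true]
        rcases Nat.mod_two_eq_zero_or_one y.val with hy | hy <;>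
          rcases Nat.mod_two_eq_zero_or_one x.val with hx | hx <;>
          simp [hx, hy] at this ⊢
      · constructor
        · intro hpar
          rw [hpar] at this
          exfalso
          rcases Nat.mod_two_eq_zero_or_one x.val with hx | hx <;> simp [hx] at this
        · intro h10; exact absurd h10 (by decide)
  · rintro ⟨hdiv, hpar⟩
    funext k
    simp only [Pi.add_apply, Pi.smul_apply, smul_eq_mul]
    by_cases hk : k.val = n - 1
    · have hk' : k = ⟨n - 1, by omega⟩ := by ext; exact hk
      rw [hk', bits_last hn, bits_last hn, oneb_last hn, mul_one]
      rcases zmod2_cases t with rfl | rfl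
      · rw [hpar.mpr rfl, add_zero]
      · have hne : ¬ (y.val % 2 = x.val % 2) := fun hh => by
          have := hpar.mp hh; exact absurd this (by decide)
        rcases Nat.mod_two_eq_zero_or_one y.val with hy | hy <;>
          rcases Nat.mod_two_eq_zero_or_one x.val with hx | hx <;>
          first
          | (exfalso; omega)
          | (simp only [hx, hy]; decide)
    · have hp : 1 ≤ n - 1 - k.val := by omega
      rw [show bits n y k = bits n x k from by
        simp only [bits, testBit_eq_of_div hdiv _ hp]]
      simp [oneb, hk]

lemma oneb_dot_bits (hn : 1 ≤ n) (x : Fin (2 ^ n)) :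
    oneb n ⬝ᵥ bits n x = if x.val % 2 = 1 then 1 else 0 := by
  rw [dot_oneb hn, bits_last hn]

lemma butterflies_eq (hn : 1 ≤ n) (x y : Fin (2 ^ n)) :
    butterflies n x y =
      ∑ t : ZMod 2, if bits n y = bits n x + t • oneb n then
        chi ((oneb n ⬝ᵥ bits n x) * (oneb n ⬝ᵥ bits n y)) else 0 := by
  rw [sum_zmod2]
  by_cases hdiv : x.val / 2 = y.val / 2
  · have hdiv' : y.val / 2 = x.val / 2 := hdiv.symm
    by_cases hpar : y.val % 2 = x.val % 2
    · have hc0 : bits n y = bits n x + (0 : ZMod 2) • oneb n :=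
        (bits_eq_add_smul_iff hn x y 0).mpr ⟨hdiv', by simp [hpar]⟩
      have hc1 : ¬ (bits n y = bits n x + (1 : ZMod 2) • oneb n) := fun hc => by
        have := ((bits_eq_add_smul_iff hn x y 1).mp hc).2.mp hpar
        exact absurd this (by decide)
      rw [if_pos hc0, if_neg hc1, add_zero, butterflies, Matrix.of_apply, if_pos hdiv,
        oneb_dot_bits hn, oneb_dot_bits hn]
      rcases Nat.mod_two_eq_zero_or_one y.val with hy | hy <;>
        rcases Nat.mod_two_eq_zero_or_one x.val with hx | hx <;>
        (simp only [hx, hy]; decide)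
    · have hc0 : ¬ (bits n y = bits n x + (0 : ZMod 2) • oneb n) := fun hc =>
        hpar (((bits_eq_add_smul_iff hn x y 0).mp hc).2.mpr rfl)
      have hc1 : bits n y = bits n x + (1 : ZMod 2) • oneb n :=
        (bits_eq_add_smul_iff hn x y 1).mpr ⟨hdiv', by
          constructor
          · intro hh; exact absurd hh hpar
          · intro hh; exact absurd hh (by decide)⟩
      rw [if_neg hc0, if_pos hc1, zero_add, butterflies, Matrix.of_apply, if_pos hdiv,
        oneb_dot_bits hn, oneb_dot_bits hn]
      rcases Nat.mod_two_eq_zero_or_one y.val with hy | hy <;>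
        rcases Nat.mod_two_eq_zero_or_one x.val with hx | hx <;>
        (simp only [hx, hy]; decide)
  · have h0 : ∀ t : ZMod 2, ¬ (bits n y = bits n x + t • oneb n) := fun t hc =>
      hdiv (((bits_eq_add_smul_iff hn x y t).mp hc).1.symm)
    rw [butterflies, Matrix.of_apply, if_neg hdiv, if_neg (h0 0), if_neg (h0 1), add_zero]


lemma dot_oneb' (hn : 1 ≤ n) (v : Fin n → ZMod 2) :
    v ⬝ᵥ oneb n = v ⟨n - 1, by omega⟩ := by
  rw [dotProduct]
  rw [Finset.sum_eq_single (⟨n - 1, by omega⟩ : Fin n)]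
  · simp [oneb]
  · intro b _ hb
    have : b.val ≠ n - 1 := fun h => hb (by ext; exact h)
    simp [oneb, this]
  · simp

lemma mulVec_oneb (hn : 1 ≤ n) (M : Matrix (Fin n) (Fin n) (ZMod 2)) (q : Fin n) :
    M.mulVec (oneb n) q = M q ⟨n - 1, by omega⟩ := by
  rw [Matrix.mulVec]
  exact dot_oneb' hn _

lemma oneb_dot_mulVec (hn : 1 ≤ n) (M : Matrix (Fin n) (Fin n) (ZMod 2)) :
    oneb n ⬝ᵥ M.mulVec (oneb n) = M ⟨n - 1, by omega⟩ ⟨n - 1, by omega⟩ := by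
  rw [dot_oneb hn, mulVec_oneb hn]

lemma spread_apply (hn : 1 ≤ n) (q c : Fin n) :
    spread n P q c = Pseg P 0 (n - 1 - c.val) q ⟨n - 1, by omega⟩ := by
  rw [spread, Matrix.of_apply, mulVec_oneb hn]

lemma spreadInvRows_apply (hn : 1 ≤ n) (r c : Fin n) :
    spreadInvRows n P r c = (Pseg P 0 (n - 1 - r.val))⁻¹ ⟨n - 1, by omega⟩ c := by
  rw [spreadInvRows, Matrix.of_apply, mulVec_oneb hn, Matrix.transpose_apply]

lemma inv_mul_cancel_mat {Q : Matrix (Fin n) (Fin n) (ZMod 2)} (hQ : IsUnit Q) :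
    Q⁻¹ * Q = 1 :=
  Matrix.nonsing_inv_mul _ ((Matrix.isUnit_iff_isUnit_det _).mp hQ)

lemma mul_inv_cancel_mat {Q : Matrix (Fin n) (Fin n) (ZMod 2)} (hQ : IsUnit Q) :
    Q * Q⁻¹ = 1 :=
  Matrix.mul_nonsing_inv _ ((Matrix.isUnit_iff_isUnit_det _).mp hQ)

lemma mulVec_eq_iff {Q : Matrix (Fin n) (Fin n) (ZMod 2)} (hQ : IsUnit Q)
    (u v : Fin n → ZMod 2) : u = Q.mulVec v ↔ v = Q⁻¹.mulVec u := by
  constructor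
  · rintro rfl
    rw [Matrix.mulVec_mulVec, inv_mul_cancel_mat hQ, Matrix.one_mulVec]
  · rintro rfl
    rw [Matrix.mulVec_mulVec, mul_inv_cancel_mat hQ, Matrix.one_mulVec]

lemma seg_entry_zero (hn : 1 ≤ n) (hX : IsUnit (spread n P))
    (hXinv : (spread n P)⁻¹ = spreadInvRows n P) (r c : Fin n) (hne : r ≠ c) :
    ((Pseg P 0 (n - 1 - r.val))⁻¹ * Pseg P 0 (n - 1 - c.val))
      ⟨n - 1, by omega⟩ ⟨n - 1, by omega⟩ = 0 := by
  have hYX : spreadInvRows n P * spread n P = 1 := by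
    rw [← hXinv]; exact inv_mul_cancel_mat hX
  have h : (spreadInvRows n P * spread n P) r c = 0 := by
    rw [hYX]; exact Matrix.one_apply_ne hne
  rw [Matrix.mul_apply] at h
  rw [Matrix.mul_apply, ← h]
  apply Finset.sum_congr rfl
  intro q _
  rw [spreadInvRows_apply P hn, spread_apply P hn]

/-- orthogonality relation (A): `1ᵀ P_{k:l} 1 = 0` for `1 ≤ k ≤ l ≤ n-1`. -/
lemma orthA (hP : ∀ k ≤ n, IsUnit (P k)) (hX : IsUnit (spread n P))
    (hXinv : (spread n P)⁻¹ = spreadInvRows n P) {k l : ℕ}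
    (hk : 1 ≤ k) (hkl : k ≤ l) (hl : l ≤ n - 1) :
    oneb n ⬝ᵥ (Pseg P k l).mulVec (oneb n) = 0 := by
  have hn : 2 ≤ n := by omega
  have hne : (⟨n - k, by omega⟩ : Fin n) ≠ (⟨n - 1 - l, by omega⟩ : Fin n) := by
    intro h
    rw [Fin.ext_iff] at h
    simp only at h
    omega
  have h := seg_entry_zero P (by omega) hX hXinv _ _ hne
  simp only at h
  rw [show n - 1 - (n - k) = k - 1 by omega, show n - 1 - (n - 1 - l) = l by omega] at h
  have hA : IsUnit (Pseg P 0 (k - 1)) := Pseg_isUnit P hP (by omega)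
  have happ : Pseg P 0 (k - 1) * Pseg P k l = Pseg P 0 l := by
    have h2 := Pseg_append P (i := 0) (j := k - 1) (l := l) (by omega) (by omega)
    rwa [show k - 1 + 1 = k by omega] at h2
  have hseg : (Pseg P 0 (k - 1))⁻¹ * Pseg P 0 l = Pseg P k l := by
    rw [← happ, ← mul_assoc, inv_mul_cancel_mat hA, one_mul]
  rw [hseg] at h
  rw [oneb_dot_mulVec (by omega)]
  exact h

lemma oneb_dot_oneb (hn : 1 ≤ n) : oneb n ⬝ᵥ oneb n = 1 := by
  rw [dot_oneb hn, oneb_last hn]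

lemma add_self_vec (v : Fin n → ZMod 2) : v + v = 0 := by
  funext k
  have : ∀ u : ZMod 2, u + u = 0 := by decide
  exact this (v k)

lemma mulVec_sum' {ι : Type*} (s : Finset ι) (M : Matrix (Fin n) (Fin n) (ZMod 2))
    (f : ι → Fin n → ZMod 2) :
    M.mulVec (∑ u ∈ s, f u) = ∑ u ∈ s, M.mulVec (f u) := by
  classical
  induction s using Finset.induction with
  | empty => simp [Matrix.mulVec_zero]
  | @insert a s h ihs =>
    rw [Finset.sum_insert h, Finset.sum_insert h, Matrix.mulVec_add, ihs]

lemma dot_sum' {ι : Type*} (s : Finset ι) (v : Fin n → ZMod 2) (f : ι → Fin n → ZMod 2) :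
    v ⬝ᵥ (∑ u ∈ s, f u) = ∑ u ∈ s, v ⬝ᵥ f u := by
  classical
  induction s using Finset.induction with
  | empty => simp
  | @insert a s h ihs =>
    rw [Finset.sum_insert h, Finset.sum_insert h, dotProduct_add, ihs]

end Lemmas


section Main
variable {n : ℕ} (P : ℕ → Matrix (Fin n) (Fin n) (ZMod 2))

/-- partial product of the last `d` butterfly stages -/
def Vm (d : ℕ) : Matrix (Fin (2 ^ n)) (Fin (2 ^ n)) ℤ :=
  permMat n (P (n - d)) *
    (List.ofFn fun k : Fin d => butterflies n * permMat n (P (n - d + k.val + 1))).prod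

lemma Vm_eq_W : Vm P n = W n P := by
  simp [Vm, W]

lemma Vm_succ (d : ℕ) (hd : d + 1 ≤ n) :
    Vm P (d + 1) = permMat n (P (n - (d + 1))) * (butterflies n * Vm P d) := by
  rw [Vm, Vm, List.ofFn_succ, List.prod_cons]
  have h2 : (fun i : Fin d =>
      butterflies n * permMat n (P (n - (d + 1) + ((i : ℕ) + 1) + 1))) =
      (fun i : Fin d => butterflies n * permMat n (P (n - d + (i : ℕ) + 1))) := by
    funext i
    have : n - (d + 1) + ((i : ℕ) + 1) + 1 = n - d + (i : ℕ) + 1 := by omega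
    rw [this]
  have h1 : n - (d + 1) + (0 : Fin (d+1)).val + 1 = n - d := by
    simp only [Fin.val_zero]
    omega
  simp only [Fin.val_succ, h1, h2]
  simp only [mul_assoc]

lemma Vm_entry (hP : ∀ k ≤ n, IsUnit (P k)) (hX : IsUnit (spread n P))
    (hXinv : (spread n P)⁻¹ = spreadInvRows n P) :
    ∀ d, d ≤ n → ∀ (j i : Fin (2 ^ n)),
      Vm P d j i = ∑ s : Fin d → ZMod 2,
        if bits n j = (Pseg P (n - d) n).mulVec (bits n i)
            + ∑ t : Fin d, s t • (Pseg P (n - d) (n - d + t.val)).mulVec (oneb n)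
        then chi (∑ t : Fin d,
          (oneb n ⬝ᵥ (Pseg P (n - d + t.val + 1) n).mulVec (bits n i)) *
          ((oneb n ⬝ᵥ (Pseg P (n - d + t.val + 1) n).mulVec (bits n i)) + s t))
        else 0 := by
  intro d
  induction d with
  | zero =>
    intro _ j i
    rw [Vm]
    simp only [List.ofFn_zero, List.prod_nil, mul_one, Nat.sub_zero]
    rw [Fintype.sum_unique]
    simp only [Finset.univ_eq_empty, Finset.sum_empty, add_zero, chi_zero, Pseg_same]
    rfl
  | succ d ih =>
    intro hd j i
    have hdn : d ≤ n := by omega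
    have hn1 : 1 ≤ n := by omega
    have hm1 : n - (d + 1) + 1 = n - d := by omega
    have hPm : IsUnit (P (n - (d + 1))) := hP _ (by omega)
    rw [Vm_succ P d hd, Matrix.mul_apply]
    have hx : ∀ x : Fin (2 ^ n), permMat n (P (n - (d + 1))) j x =
        if bits n x = (P (n - (d + 1)))⁻¹.mulVec (bits n j) then 1 else 0 := by
      intro x
      rw [permMat, Matrix.of_apply]
      congr 1
      rw [eq_iff_iff]
      exact mulVec_eq_iff hPm _ _
    simp only [hx, ite_mul, one_mul, zero_mul]
    rw [sum_bits_delta]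
    rw [Matrix.mul_apply]
    simp only [butterflies_eq hn1, Finset.sum_mul, ite_mul, zero_mul]
    rw [Finset.sum_comm]
    have hbx0 : bits n ((bE n).symm ((P (n - (d + 1)))⁻¹.mulVec (bits n j)))
        = (P (n - (d + 1)))⁻¹.mulVec (bits n j) := bits_bE_symm n _
    -- collapse the inner sum over y for each t
    have hcollapse : ∀ t : ZMod 2,
        (∑ y : Fin (2 ^ n), if bits n y =
            bits n ((bE n).symm ((P (n - (d + 1)))⁻¹.mulVec (bits n j))) + t • oneb n then
          chi ((oneb n ⬝ᵥ bits n ((bE n).symm ((P (n - (d + 1)))⁻¹.mulVec (bits n j)))) *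
            (oneb n ⬝ᵥ bits n y)) * Vm P d y i else 0)
        = chi ((oneb n ⬝ᵥ bits n ((bE n).symm ((P (n - (d + 1)))⁻¹.mulVec (bits n j)))) * ((oneb n ⬝ᵥ bits n ((bE n).symm ((P (n - (d + 1)))⁻¹.mulVec (bits n j)))) + t)) *
            Vm P d ((bE n).symm (bits n ((bE n).symm ((P (n - (d + 1)))⁻¹.mulVec (bits n j))) + t • oneb n)) i := by
      intro t
      rw [sum_bits_delta n _ (fun y =>
        chi ((oneb n ⬝ᵥ bits n ((bE n).symm ((P (n - (d + 1)))⁻¹.mulVec (bits n j)))) *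
          (oneb n ⬝ᵥ bits n y)) * Vm P d y i)]
      rw [hbx0, bits_bE_symm, dotProduct_add, dotProduct_smul, oneb_dot_oneb hn1,
        smul_eq_mul, mul_one]
    simp only [hcollapse]
    simp only [ih hdn]
    simp only [bits_bE_symm]
    simp only [Finset.mul_sum, mul_ite, mul_zero]
    rw [← Equiv.sum_comp (Fin.consEquiv fun _ : Fin (d + 1) => ZMod 2)]
    rw [Fintype.sum_prod_type]
    apply Finset.sum_congr rfl
    intro t _
    apply Finset.sum_congr rfl
    intro s _
    -- unfold the cons on the RHS
    simp only [Fin.consEquiv_apply]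
    simp only [Fin.sum_univ_succ, Fin.cons_zero, Fin.cons_succ, Fin.val_zero, Fin.val_succ,
      add_zero]
    simp only [show ∀ u : ℕ, n - (d + 1) + (u + 1) = n - d + u from fun u => by omega]
    simp only [hm1, Pseg_same]
    simp only [add_zero]
    have hsegn : Pseg P (n - (d + 1)) n = P (n - (d + 1)) * Pseg P (n - d) n := by
      rw [Pseg_cons P (show n - (d + 1) ≤ n by omega), hm1]
    have hsegu : ∀ u : ℕ, Pseg P (n - (d + 1)) (n - d + u)
        = P (n - (d + 1)) * Pseg P (n - d) (n - d + u) := by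
      intro u
      rw [Pseg_cons P (show n - (d + 1) ≤ n - d + u by omega), hm1]
    simp only [hsegn, hsegu, ← Matrix.mulVec_mulVec]
    rw [show t • P (n - (d + 1)) *ᵥ oneb n + ∑ x : Fin d, s x •
          P (n - (d + 1)) *ᵥ (Pseg P (n - d) (n - d + (x : ℕ)) *ᵥ oneb n)
        = P (n - (d + 1)) *ᵥ (t • oneb n + ∑ x : Fin d, s x •
          Pseg P (n - d) (n - d + (x : ℕ)) *ᵥ oneb n) from by
      rw [Matrix.mulVec_add, Matrix.mulVec_smul, mulVec_sum']
      simp only [Matrix.mulVec_smul]]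
    rw [show P (n - (d + 1)) *ᵥ (Pseg P (n - d) n *ᵥ bits n i) + P (n - (d + 1)) *ᵥ
          (t • oneb n + ∑ x : Fin d, s x • Pseg P (n - d) (n - d + (x : ℕ)) *ᵥ oneb n)
        = P (n - (d + 1)) *ᵥ (Pseg P (n - d) n *ᵥ bits n i + (t • oneb n +
          ∑ x : Fin d, s x • Pseg P (n - d) (n - d + (x : ℕ)) *ᵥ oneb n)) from
      (Matrix.mulVec_add _ _ _).symm]
    set base := Pseg P (n - d) n *ᵥ bits n i with hbasedef
    set S := ∑ x : Fin d, s x • Pseg P (n - d) (n - d + (x : ℕ)) *ᵥ oneb n with hSdef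
    have hcond : (bits n j = P (n - (d + 1)) *ᵥ (base + (t • oneb n + S)))
        ↔ ((P (n - (d + 1)))⁻¹ *ᵥ bits n j + t • oneb n = base + S) := by
      rw [mulVec_eq_iff hPm]
      constructor
      · intro h
        rw [← h]
        calc base + (t • oneb n + S) + t • oneb n
            = base + S + (t • oneb n + t • oneb n) := by abel
          _ = base + S := by rw [add_self_vec, add_zero]
      · intro h
        have h2 : (P (n - (d + 1)))⁻¹ *ᵥ bits n j = base + S + t • oneb n := by
          rw [← h]
          calc (P (n - (d + 1)))⁻¹ *ᵥ bits n j
              = (P (n - (d + 1)))⁻¹ *ᵥ bits n j + (t • oneb n + t • oneb n) := by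
                rw [add_self_vec, add_zero]
            _ = (P (n - (d + 1)))⁻¹ *ᵥ bits n j + t • oneb n + t • oneb n := by abel
        rw [h2]
        abel
    by_cases hc : (P (n - (d + 1)))⁻¹ *ᵥ bits n j + t • oneb n = base + S
    · rw [if_pos hc, if_pos (hcond.mpr hc)]
      have hS : oneb n ⬝ᵥ S = 0 := by
        rw [hSdef, dot_sum']
        apply Finset.sum_eq_zero
        intro u _
        rw [dotProduct_smul, smul_eq_mul,
          orthA P hP hX hXinv (by omega) (by omega) (by have := u.isLt; omega), mul_zero]
      have hα : oneb n ⬝ᵥ ((P (n - (d + 1)))⁻¹ *ᵥ bits n j) = oneb n ⬝ᵥ base + t := by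
        have h3 := congrArg (fun v => oneb n ⬝ᵥ v) hc
        rw [dotProduct_add, dotProduct_add, dotProduct_smul, oneb_dot_oneb hn1,
          smul_eq_mul, mul_one, hS, add_zero] at h3
        have hz : ∀ a b c : ZMod 2, a + c = b → a = b + c := by decide
        exact hz _ _ _ h3
      rw [chi_add]
      congr 1
      rw [hα]
      exact congrArg chi (by
        have hz : ∀ a b : ZMod 2, (a + b) * (a + b + b) = a * (a + b) := by decide
        exact hz _ t)
    · rw [if_neg hc, if_neg (fun h => hc (hcond.mp h))]


lemma spread_mulVec (hn : 1 ≤ n) (s : Fin n → ZMod 2) :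
    (∑ t : Fin n, s t • (Pseg P 0 (t : ℕ)).mulVec (oneb n))
      = (spread n P).mulVec (fun c => s (Fin.rev c)) := by
  funext r
  rw [Finset.sum_apply]
  have h1 : ∀ t : Fin n, (s t • (Pseg P 0 (t : ℕ)).mulVec (oneb n)) r
      = s t * Pseg P 0 (t : ℕ) r ⟨n - 1, by omega⟩ := by
    intro t
    rw [Pi.smul_apply, smul_eq_mul, mulVec_oneb hn]
  rw [Finset.sum_congr rfl fun t _ => h1 t]
  show _ = ∑ c, spread n P r c * s (Fin.rev c)
  rw [← Equiv.sum_comp Fin.revPerm (fun c => spread n P r c * s (Fin.rev c))]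
  apply Finset.sum_congr rfl
  intro t _
  show s t * _ = spread n P r (Fin.rev t) * s (Fin.rev (Fin.rev t))
  rw [Fin.rev_rev, spread_apply P hn, mul_comm]
  rw [show n - 1 - ((Fin.rev t) : ℕ) = (t : ℕ) from by rw [Fin.val_rev]; omega]

lemma Y_mulVec (hn : 1 ≤ n) (v : Fin n → ZMod 2) (r : Fin n) :
    (spreadInvRows n P).mulVec v r
      = oneb n ⬝ᵥ ((Pseg P 0 (n - 1 - (r : ℕ)))⁻¹.mulVec v) := by
  rw [dot_oneb hn]
  show ∑ c, spreadInvRows n P r c * v c = _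
  show _ = ∑ c, (Pseg P 0 (n - 1 - (r : ℕ)))⁻¹ ⟨n - 1, by omega⟩ c * v c
  apply Finset.sum_congr rfl
  intro cc _
  rw [spreadInvRows_apply P hn]

lemma seg_inv_mul (hP : ∀ k ≤ n, IsUnit (P k)) {a : ℕ} (ha : a + 1 ≤ n) :
    (Pseg P 0 a)⁻¹ * Pseg P 0 n = Pseg P (a + 1) n := by
  have happ : Pseg P 0 a * Pseg P (a + 1) n = Pseg P 0 n := Pseg_append P (by omega) (by omega)
  have hA : IsUnit (Pseg P 0 a) := Pseg_isUnit P hP (by omega)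
  rw [← happ, ← mul_assoc, inv_mul_cancel_mat hA, one_mul]

end Main

/-- If the spreading matrix satisfies the inverse condition
`X⁻¹ = (P_{0:n-1}^{-T}1_b | ⋯ | P_0^{-T}1_b)ᵀ`, then
`W(P)[j,i] = +1` if `i_bᵀ P_{0:n}ᵀ (XXᵀ)⁻¹ j_b = 0` in `F_2`, and `−1` otherwise. -/
theorem entries_formula (n : ℕ) (P : ℕ → Matrix (Fin n) (Fin n) (ZMod 2))
    (hP : ∀ k ≤ n, IsUnit (P k)) (hX : IsUnit (spread n P))
    (hXinv : (spread n P)⁻¹ = spreadInvRows n P) (i j : Fin (2 ^ n)) :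
    W n P j i =
      if bits n i ⬝ᵥ ((Pseg P 0 n)ᵀ * (spread n P * (spread n P)ᵀ)⁻¹).mulVec (bits n j) = 0
      then 1 else -1 := by
  rcases Nat.eq_zero_or_pos n with hn0 | hn1
  · subst hn0
    have hcond : bits 0 i ⬝ᵥ ((Pseg P 0 0)ᵀ * (spread 0 P * (spread 0 P)ᵀ)⁻¹).mulVec (bits 0 j)
        = 0 := by
      simp [dotProduct]
    rw [if_pos hcond, W, List.ofFn_zero, List.prod_nil, mul_one, permMat, Matrix.of_apply,
      if_pos (Subsingleton.elim _ _)]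
  · rw [← Vm_eq_W P, Vm_entry P hP hX hXinv n le_rfl j i]
    simp only [Nat.sub_self, zero_add]
    set sstar : Fin n → ZMod 2 := fun t =>
      (oneb n ⬝ᵥ ((Pseg P 0 (t : ℕ))⁻¹.mulVec (bits n j)))
      + (oneb n ⬝ᵥ ((Pseg P ((t : ℕ) + 1) n).mulVec (bits n i))) with hsstar
    have hstar : (fun cc => sstar (Fin.rev cc))
        = (spread n P)⁻¹.mulVec (bits n j + (Pseg P 0 n).mulVec (bits n i)) := by
      funext cc
      rw [hXinv, Y_mulVec P hn1, hsstar]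
      show (oneb n ⬝ᵥ ((Pseg P 0 ((Fin.rev cc) : ℕ))⁻¹.mulVec (bits n j)))
          + (oneb n ⬝ᵥ ((Pseg P (((Fin.rev cc) : ℕ) + 1) n).mulVec (bits n i))) = _
      rw [show ((Fin.rev cc) : ℕ) = n - 1 - (cc : ℕ) from by rw [Fin.val_rev]; omega]
      rw [Matrix.mulVec_add, dotProduct_add]
      congr 1
      rw [Matrix.mulVec_mulVec, seg_inv_mul P hP (show (n - 1 - (cc : ℕ)) + 1 ≤ n by omega)]
    have hw : ∀ s : Fin n → ZMod 2,
        (bits n j = (Pseg P 0 n).mulVec (bits n i)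
          + ∑ t : Fin n, s t • (Pseg P 0 (t : ℕ)).mulVec (oneb n))
        ↔ s = sstar := by
      intro s
      rw [spread_mulVec P hn1 s]
      constructor
      · intro h
        have h1 : (spread n P).mulVec (fun cc => s (Fin.rev cc))
            = bits n j + (Pseg P 0 n).mulVec (bits n i) := by
          rw [h]
          calc (spread n P).mulVec (fun cc => s (Fin.rev cc))
              = ((Pseg P 0 n).mulVec (bits n i) + (Pseg P 0 n).mulVec (bits n i))
                + (spread n P).mulVec (fun cc => s (Fin.rev cc)) := by
                rw [add_self_vec, zero_add]
            _ = (Pseg P 0 n).mulVec (bits n i) + (spread n P).mulVec (fun cc => s (Fin.rev cc))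
                + (Pseg P 0 n).mulVec (bits n i) := by abel
        have h2 := (mulVec_eq_iff hX _ _).mp h1.symm
        rw [← hstar] at h2
        funext t
        have h3 := congrFun h2 (Fin.rev t)
        rwa [Fin.rev_rev] at h3
      · rintro rfl
        have h1 := (mulVec_eq_iff hX _ _).mpr hstar
        rw [← h1]
        calc bits n j = bits n j
              + ((Pseg P 0 n).mulVec (bits n i) + (Pseg P 0 n).mulVec (bits n i)) := by
              rw [add_self_vec, add_zero]
          _ = (Pseg P 0 n).mulVec (bits n i) + (bits n j + (Pseg P 0 n).mulVec (bits n i)) := by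
              abel
    simp only [hw]
    rw [Finset.sum_ite_eq' Finset.univ sstar, if_pos (Finset.mem_univ _)]
    have hval : ∀ t : Fin n,
        (oneb n ⬝ᵥ ((Pseg P ((t : ℕ) + 1) n).mulVec (bits n i))) + sstar t
        = oneb n ⬝ᵥ ((Pseg P 0 (t : ℕ))⁻¹.mulVec (bits n j)) := by
      intro t
      rw [hsstar]
      have hz : ∀ x y : ZMod 2, x + (y + x) = y := by decide
      exact hz _ _
    have hsum : (∑ t : Fin n,
          (oneb n ⬝ᵥ ((Pseg P ((t : ℕ) + 1) n).mulVec (bits n i))) *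
          ((oneb n ⬝ᵥ ((Pseg P ((t : ℕ) + 1) n).mulVec (bits n i))) + sstar t))
        = ∑ t : Fin n,
          (oneb n ⬝ᵥ ((Pseg P ((t : ℕ) + 1) n).mulVec (bits n i))) *
          (oneb n ⬝ᵥ ((Pseg P 0 (t : ℕ))⁻¹.mulVec (bits n j))) :=
      Finset.sum_congr rfl fun t _ => by rw [hval t]
    rw [hsum]
    have htarget : bits n i ⬝ᵥ ((Pseg P 0 n)ᵀ * (spread n P * (spread n P)ᵀ)⁻¹).mulVec (bits n j)
        = ∑ t : Fin n,
          (oneb n ⬝ᵥ ((Pseg P ((t : ℕ) + 1) n).mulVec (bits n i))) *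
          (oneb n ⬝ᵥ ((Pseg P 0 (t : ℕ))⁻¹.mulVec (bits n j))) := by
      rw [Matrix.mul_inv_rev, ← Matrix.transpose_nonsing_inv, hXinv]
      simp only [← Matrix.mulVec_mulVec]
      rw [dotProduct_mulVec, vecMul_transpose, dotProduct_mulVec, vecMul_transpose]
      rw [dotProduct]
      rw [← Equiv.sum_comp Fin.revPerm]
      apply Finset.sum_congr rfl
      intro t _
      show (spreadInvRows n P).mulVec ((Pseg P 0 n).mulVec (bits n i)) (Fin.rev t)
          * (spreadInvRows n P).mulVec (bits n j) (Fin.rev t) = _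
      rw [Y_mulVec P hn1, Y_mulVec P hn1]
      rw [show n - 1 - ((Fin.rev t) : ℕ) = (t : ℕ) from by rw [Fin.val_rev]; omega]
      congr 2
      rw [Matrix.mulVec_mulVec, seg_inv_mul P hP t.isLt]
    rw [htarget]
    rfl
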